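/- Let m > 0, k > 0, s ∈ {+1, −1}, and let R : ℝ → ℝ be differentiable with R(t) > 0. Set ω(t) = √(m² + k²/R(t)²) and define the matrix-valued function 𝒰(t) = (1/√2) [[√(1 + m/ω(t)), −s√(1 − m/ω(t))], [s√(1 − m/ω(t)), √(1 + m/ω(t))]]. Then i 𝒰(t)ᴴ (d𝒰/dt)(t) is the off-diagonal antihermitian-free matrix [[0, i s k m R'(t)/(2(m² R(t)² + k²))], [−i s k m R'(t)/(2(m² R(t)² + k²)), 0]]; in particular its diagonal entries vanish and its off-diagonal entries have modulus |k m R'(t)| / (2(m² R(t)² + k²)). -/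

import Mathlib

open Matrix

/-- The mode matrix `𝒰(t)` of the Dirac field on a Robertson-Walker spacetime,
with `ω(t) = √(m² + k²/R(t)²)`. -/
noncomputable def Umat (m k s : ℝ) (R : ℝ → ℝ) (τ : ℝ) : Matrix (Fin 2) (Fin 2) ℂ :=
  ((Real.sqrt 2)⁻¹ : ℂ) •
    !![((Real.sqrt (1 + m / Real.sqrt (m ^ 2 + k ^ 2 / R τ ^ 2)) : ℝ) : ℂ),
       ((-(s * Real.sqrt (1 - m / Real.sqrt (m ^ 2 + k ^ 2 / R τ ^ 2))) : ℝ) : ℂ);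
       (((s * Real.sqrt (1 - m / Real.sqrt (m ^ 2 + k ^ 2 / R τ ^ 2))) : ℝ) : ℂ),
       ((Real.sqrt (1 + m / Real.sqrt (m ^ 2 + k ^ 2 / R τ ^ 2)) : ℝ) : ℂ)]

set_option maxHeartbeats 1000000 in
/-- `i 𝒰(t)ᴴ 𝒰'(t)` is the off-diagonal matrix
`[[0, iskm R'(t)/(2(m²R(t)²+k²))], [−iskm R'(t)/(2(m²R(t)²+k²)), 0]]`;
in particular its diagonal entries vanish and its off-diagonal entries have
modulus `|kmR'(t)|/(2(m²R(t)²+k²))`. -/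
theorem stmt_5 (m k s : ℝ) (hm : 0 < m) (hk : 0 < k) (hs : s = 1 ∨ s = -1)
    (R : ℝ → ℝ) (hRpos : ∀ τ, 0 < R τ) (t r' : ℝ) (hR' : HasDerivAt R r' t)
    (U' : Matrix (Fin 2) (Fin 2) ℂ)
    (hU' : ∀ i j, HasDerivAt (fun τ => Umat m k s R τ i j) (U' i j) t) :
    Complex.I • ((Umat m k s R t)ᴴ * U') =
      !![0, Complex.I * ((s * k * m * r' / (2 * (m ^ 2 * R t ^ 2 + k ^ 2)) : ℝ) : ℂ);
         -(Complex.I * ((s * k * m * r' / (2 * (m ^ 2 * R t ^ 2 + k ^ 2)) : ℝ) : ℂ)), 0] ∧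
    (Complex.I • ((Umat m k s R t)ᴴ * U')) 0 0 = 0 ∧
    (Complex.I • ((Umat m k s R t)ᴴ * U')) 1 1 = 0 ∧
    ‖(Complex.I • ((Umat m k s R t)ᴴ * U')) 0 1‖ =
      |k * m * r'| / (2 * (m ^ 2 * R t ^ 2 + k ^ 2)) ∧
    ‖(Complex.I • ((Umat m k s R t)ᴴ * U')) 1 0‖ =
      |k * m * r'| / (2 * (m ^ 2 * R t ^ 2 + k ^ 2)) := by
  have hs2 : s ^ 2 = 1 := by rcases hs with h | h <;> rw [h] <;> norm_num
  set W : ℝ → ℝ := fun τ => Real.sqrt (m ^ 2 + k ^ 2 / R τ ^ 2) with hWdef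
  have hRt : 0 < R t := hRpos t
  have hRne : R t ≠ 0 := hRt.ne'
  have hApos : 0 < m ^ 2 + k ^ 2 / R t ^ 2 := by positivity
  have hWpos : 0 < W t := Real.sqrt_pos.mpr hApos
  have hWne : W t ≠ 0 := hWpos.ne'
  have hW2 : W t ^ 2 = m ^ 2 + k ^ 2 / R t ^ 2 := Real.sq_sqrt hApos.le
  have hFlt : m / W t < 1 := by
    rw [div_lt_one hWpos]
    nlinarith [hW2, sq_nonneg (W t - m),
      div_pos (by positivity : (0:ℝ) < k^2) (by positivity : (0:ℝ) < R t ^2)]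
  have hFpos : 0 < m / W t := div_pos hm hWpos
  -- derivatives
  have hR2 : HasDerivAt (fun τ => R τ ^ 2) (2 * R t * r') t := by
    simpa using hR'.fun_pow 2
  have hdiv : HasDerivAt (fun τ => k ^ 2 / R τ ^ 2) (-(2 * k ^ 2 * r' / R t ^ 3)) t := by
    have := ((hR2.fun_inv (by positivity)).const_mul (k^2))
    refine this.congr_deriv ?_
    field_simp
  have hA : HasDerivAt (fun τ => m ^ 2 + k ^ 2 / R τ ^ 2) (-(2 * k ^ 2 * r' / R t ^ 3)) t := by
    simpa using (hasDerivAt_const t (m^2)).fun_add hdiv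
  have hW : HasDerivAt W (-(k ^ 2 * r' / (R t ^ 3 * W t))) t := by
    have := hA.sqrt hApos.ne'
    convert this using 1
    change _ = _ / (2 * W t)
    field_simp
  set F' : ℝ := m * k ^ 2 * r' / (R t ^ 3 * W t ^ 3) with hF'def
  have hF : HasDerivAt (fun τ => m / W τ) F' t := by
    have := (hW.fun_inv hWne).const_mul m
    have h2 : HasDerivAt (fun τ => m * (W τ)⁻¹) F' t := by
      refine this.congr_deriv ?_
      rw [hF'def]; field_simp
    simpa [div_eq_mul_inv] using h2
  set a : ℝ := Real.sqrt (1 + m / W t) with hadef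
  set b : ℝ := Real.sqrt (1 - m / W t) with hbdef
  have hapos : 0 < a := Real.sqrt_pos.mpr (by linarith)
  have hbpos : 0 < b := Real.sqrt_pos.mpr (by linarith)
  have ha2 : a ^ 2 = 1 + m / W t := Real.sq_sqrt (by linarith)
  have hb2 : b ^ 2 = 1 - m / W t := Real.sq_sqrt (by linarith)
  have ha : HasDerivAt (fun τ => Real.sqrt (1 + m / W τ)) (F' / (2 * a)) t := by
    have := ((hasDerivAt_const t (1:ℝ)).fun_add hF).sqrt (by intro h; nlinarith)
    simpa using this
  have hb : HasDerivAt (fun τ => Real.sqrt (1 - m / W τ)) (-F' / (2 * b)) t := by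
    have := ((hasDerivAt_const t (1:ℝ)).fun_sub hF).sqrt (by intro h; nlinarith)
    simpa using this
  -- identify U' entries
  set c : ℝ := (Real.sqrt 2)⁻¹ with hcdef
  have hc2 : c ^ 2 = 2⁻¹ := by
    rw [hcdef, ← Real.sqrt_inv]
    exact Real.sq_sqrt (by norm_num)
  have hd00 : HasDerivAt (fun τ => Umat m k s R τ 0 0) ((c:ℂ) * ((F' / (2*a) : ℝ) : ℂ)) t := by
    have h := (ha.ofReal_comp).const_mul (c : ℂ)
    convert h using 2 with τ
    · rfl
    simp [Umat]
    rw [hcdef]; push_cast; rfl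
  have hd11 : HasDerivAt (fun τ => Umat m k s R τ 1 1) ((c:ℂ) * ((F' / (2*a) : ℝ) : ℂ)) t := by
    have h := (ha.ofReal_comp).const_mul (c : ℂ)
    convert h using 2 with τ
    · rfl
    simp [Umat]
    rw [hcdef]; push_cast; rfl
  have hd01 : HasDerivAt (fun τ => Umat m k s R τ 0 1) ((c:ℂ) * ((-(s * (-F' / (2*b))) : ℝ) : ℂ)) t := by
    have h := (((hb.const_mul s).neg).ofReal_comp).const_mul (c : ℂ)
    convert h using 2 with τ
    · rfl
    simp [Umat]
    rw [hcdef]; push_cast; rfl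
  have hd10 : HasDerivAt (fun τ => Umat m k s R τ 1 0) ((c:ℂ) * (((s * (-F' / (2*b))) : ℝ) : ℂ)) t := by
    have h := ((hb.const_mul s).ofReal_comp).const_mul (c : ℂ)
    convert h using 2 with τ
    · rfl
    simp [Umat]
    rw [hcdef]; push_cast; rfl
  have e00 : U' 0 0 = (c:ℂ) * ((F' / (2*a) : ℝ) : ℂ) := (hU' 0 0).unique hd00
  have e11 : U' 1 1 = (c:ℂ) * ((F' / (2*a) : ℝ) : ℂ) := (hU' 1 1).unique hd11
  have e01 : U' 0 1 = (c:ℂ) * ((-(s * (-F' / (2*b))) : ℝ) : ℂ) := (hU' 0 1).unique hd01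
  have e10 : U' 1 0 = (c:ℂ) * (((s * (-F' / (2*b))) : ℝ) : ℂ) := (hU' 1 0).unique hd10
  -- value of Umat at t
  have hUt : Umat m k s R t =
      !![(↑(c * a) : ℂ), (↑(c * (-(s * b))) : ℂ); (↑(c * (s * b)) : ℂ), (↑(c * a) : ℂ)] := by
    rw [Umat]
    ext i j
    fin_cases i <;> fin_cases j <;>
      simp [hadef, hbdef, hWdef, hcdef] <;> push_cast <;> ring
  -- key real facts
  have hRW : R t ^ 2 * W t ^ 2 = m ^ 2 * R t ^ 2 + k ^ 2 := by
    rw [hW2]; field_simp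
  have hab : a * b = k / (R t * W t) := by
    rw [hadef, hbdef, ← Real.sqrt_mul (by linarith)]
    rw [show (1 + m / W t) * (1 - m / W t) = (k / (R t * W t)) ^ 2 by
      field_simp
      nlinarith [hRW, sq_nonneg (W t)]]
    exact Real.sqrt_sq (by positivity)
  have hsum : a / (2 * b) + b / (2 * a) = R t * W t / k := by
    have h1 : a / (2 * b) + b / (2 * a) = (a ^ 2 + b ^ 2) / (2 * (a * b)) := by
      field_simp
    have h2 : a ^ 2 + b ^ 2 = 2 := by rw [ha2, hb2]; ring
    rw [h1, h2, hab]
    field_simp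
  set v : ℝ := s * k * m * r' / (2 * (m ^ 2 * R t ^ 2 + k ^ 2)) with hvdef
  have hkey : c ^ 2 * (s * F' * (a / (2 * b) + b / (2 * a))) = v := by
    rw [hsum, hc2, hF'def, hvdef, ← hRW]
    field_simp
  -- the main matrix identity
  have hmain : Complex.I • ((Umat m k s R t)ᴴ * U') =
      !![0, Complex.I * ((v : ℝ) : ℂ); -(Complex.I * ((v : ℝ) : ℂ)), 0] := by
    have hane : a ≠ 0 := hapos.ne'
    have hbne : b ≠ 0 := hbpos.ne'
    have r00 : c * a * (c * (F' / (2*a))) + c * (s*b) * (c * (s * (-F' / (2*b)))) = 0 := by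
      have h1 : a * (F' / (2*a)) = F'/2 := by field_simp
      have h2 : b * (-F' / (2*b)) = -F'/2 := by field_simp
      linear_combination c^2 * h1 + c^2*s^2*h2 + (-(c^2*F'/2)) * hs2
    have r11 : c * (s*b) * (c * (s * (-F' / (2*b)))) + c * a * (c * (F' / (2*a))) = 0 := by
      have h1 : a * (F' / (2*a)) = F'/2 := by field_simp
      have h2 : b * (-F' / (2*b)) = -F'/2 := by field_simp
      linear_combination c^2 * h1 + c^2*s^2*h2 + (-(c^2*F'/2)) * hs2
    have r01 : -(c * a * (c * (s * (-F' / (2*b))))) + c * (s*b) * (c * (F' / (2*a))) = v := by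
      rw [← hkey]; ring
    have r10 : -(c * (s*b) * (c * (F' / (2*a)))) + c * a * (c * (s * (-F' / (2*b)))) = -v := by
      rw [← hkey]; ring
    ext i j
    rw [hUt]
    fin_cases i <;> fin_cases j
    · simp [Matrix.mul_apply, Fin.sum_univ_two, e00, e10]
      have := congrArg (fun x:ℝ => (x:ℂ)) r00
      push_cast at this ⊢
      linear_combination this
    · simp [Matrix.mul_apply, Fin.sum_univ_two, e01, e11]
      have := congrArg (fun x:ℝ => (x:ℂ)) r01
      push_cast at this ⊢
      linear_combination this
    · simp [Matrix.mul_apply, Fin.sum_univ_two, e00, e10]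
      rw [show (-((c:ℂ) * ((s:ℂ) * (b:ℂ)) * ((c:ℂ) * ((F':ℝ) / (2 * (a:ℂ))))) +
          (c:ℂ) * (a:ℂ) * ((c:ℂ) * ((s:ℂ) * (-(F':ℝ) / (2 * (b:ℂ))))) : ℂ) = ((-v : ℝ) : ℂ) by
        exact_mod_cast r10]
      push_cast
      ring
    · simp [Matrix.mul_apply, Fin.sum_univ_two, e01, e11]
      have := congrArg (fun x:ℝ => (x:ℂ)) r11
      push_cast at this ⊢
      linear_combination this
  refine ⟨hmain, ?_, ?_, ?_, ?_⟩
  · rw [hmain]; simp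
  · rw [hmain]; simp
  · rw [hmain]
    have : |v| = |k * m * r'| / (2 * (m ^ 2 * R t ^ 2 + k ^ 2)) := by
      rw [hvdef, abs_div, abs_of_pos (by positivity : (0:ℝ) < 2 * (m ^ 2 * R t ^ 2 + k ^ 2))]
      congr 1
      rcases hs with h | h <;> rw [h] <;> simp [abs_mul] <;> ring
    simpa [abs_mul] using this
  · rw [hmain]
    have : |v| = |k * m * r'| / (2 * (m ^ 2 * R t ^ 2 + k ^ 2)) := by
      rw [hvdef, abs_div, abs_of_pos (by positivity : (0:ℝ) < 2 * (m ^ 2 * R t ^ 2 + k ^ 2))]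
      congr 1
      rcases hs with h | h <;> rw [h] <;> simp [abs_mul] <;> ring
    simpa [abs_mul] using this
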